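/- Let Π be a family of deterministic stopping policies with VC dimension at most d (as Boolean classifiers on List O), d ≥ 1, and let g : List O → ℝ be a reward function. For π ∈ Π and Δ ∈ ℝ, let I(π, Δ) be the Boolean function on full trajectories defined by I(π, Δ)(x) = true iff R_π(x) ≥ Δ. Then for any n full trajectories x₁, …, xₙ of horizon H with n·H ≥ d, the number of distinct Boolean labeling vectors { (I(π,Δ)(x₁), …, I(π,Δ)(xₙ)) : π ∈ Π, Δ ∈ ℝ } is at most (n·H + 1)·(e·n·H/d)^d. -/

import Mathlib

open scoped BigOperators

/-- The `t`-prefix of a full trajectory `x : Fin H → O`, i.e. the list `[x 0, …, x (t-1)]`. -/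
def trajPrefix {O : Type*} {H : ℕ} (x : Fin H → O) (t : ℕ) : List O :=
  (List.ofFn x).take t

open Classical in
/-- The stopping time of policy `π` on full trajectory `x`: the least `t` with
`1 ≤ t ≤ H` such that `π` halts on the `t`-prefix of `x`, and `H` if no such `t` exists. -/
noncomputable def stopTime {O : Type*} (H : ℕ) (π : List O → Bool) (x : Fin H → O) : ℕ :=
  if h : ∃ t, (1 ≤ t ∧ t ≤ H) ∧ π (trajPrefix x t) = true then Nat.find h else H

/-- The return of policy `π` on full trajectory `x` under reward function `g`. -/
noncomputable def policyReturn {O : Type*} {H : ℕ} (g : List O → ℝ) (π : List O → Bool)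
    (x : Fin H → O) : ℝ :=
  g (trajPrefix x (stopTime H π x))

/-- A family `Π` of policies shatters a finite set `S` of lists if every Boolean
labeling of `S` is realized by some member of `Π`. -/
def ShattersLists {O : Type*} (P : Set (List O → Bool)) (S : Finset (List O)) : Prop :=
  ∀ f : List O → Bool, ∃ π ∈ P, ∀ l ∈ S, π l = f l

lemma phi_le (m d : ℕ) (hd : 1 ≤ d) (hdm : d ≤ m) :
    ((∑ k ∈ Finset.range (d+1), m.choose k : ℕ) : ℝ) ≤ (Real.exp 1 * m / d) ^ d := by
  have hm : 0 < m := lt_of_lt_of_le hd hdm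
  set q : ℝ := (d : ℝ) / m with hq
  have hq0 : 0 < q := by positivity
  have hq1 : q ≤ 1 := by
    rw [hq, div_le_one (by positivity)]
    exact_mod_cast hdm
  have key : ((∑ k ∈ Finset.range (d+1), m.choose k : ℕ) : ℝ) * q ^ d
      ≤ (1 + q) ^ m := by
    push_cast
    calc (∑ k ∈ Finset.range (d+1), (m.choose k : ℝ)) * q ^ d
        = ∑ k ∈ Finset.range (d+1), (m.choose k : ℝ) * q ^ d := by
          rw [Finset.sum_mul]
      _ ≤ ∑ k ∈ Finset.range (d+1), (m.choose k : ℝ) * q ^ k := by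
          apply Finset.sum_le_sum
          intro k hk
          have hk' : k ≤ d := Nat.lt_succ_iff.mp (Finset.mem_range.mp hk)
          have := pow_le_pow_of_le_one hq0.le hq1 hk'
          exact mul_le_mul_of_nonneg_left this (by positivity)
      _ ≤ ∑ k ∈ Finset.range (m+1), (m.choose k : ℝ) * q ^ k := by
          apply Finset.sum_le_sum_of_subset_of_nonneg
          · exact Finset.range_subset_range.mpr (by omega)
          · intro k _ _; positivity
      _ = (q + 1) ^ m := by
          rw [add_pow]
          simp [mul_comm]
      _ = (1 + q) ^ m := by ring
  have h2 : (1 + q) ^ m ≤ Real.exp 1 ^ d := by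
    calc (1 + q) ^ m ≤ Real.exp q ^ m := by
          apply pow_le_pow_left₀ (by positivity)
          linarith [Real.add_one_le_exp q]
      _ = Real.exp (m * q) := by rw [← Real.exp_nat_mul]
      _ = Real.exp d := by
          congr 1
          rw [hq]; field_simp
      _ = Real.exp 1 ^ d := by rw [← Real.exp_nat_mul, mul_one]
  have hqd : 0 < q ^ d := by positivity
  rw [← le_div_iff₀ hqd] at key
  calc ((∑ k ∈ Finset.range (d+1), m.choose k : ℕ) : ℝ)
      ≤ (1 + q) ^ m / q ^ d := key
    _ ≤ Real.exp 1 ^ d / q ^ d := by gcongr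
    _ = (Real.exp 1 * m / d) ^ d := by
        rw [← div_pow]
        congr 1
        rw [hq]
        rw [div_div_eq_mul_div]

lemma bool_eq_of_iff {a b : Bool} (h : (a = true) ↔ (b = true)) : a = b := by
  cases a <;> cases b <;> simp_all

open Classical in
lemma stopTime_congr {O : Type*} {H : ℕ} (π π' : List O → Bool) (x : Fin H → O)
    (h : ∀ t, 1 ≤ t → t ≤ H → π (trajPrefix x t) = π' (trajPrefix x t)) :
    stopTime H π x = stopTime H π' x := by
  have hiff : ∀ t, ((1 ≤ t ∧ t ≤ H) ∧ π (trajPrefix x t) = true) ↔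
      ((1 ≤ t ∧ t ≤ H) ∧ π' (trajPrefix x t) = true) := by
    intro t
    constructor <;> rintro ⟨h1, h2⟩ <;> refine ⟨h1, ?_⟩
    · rw [← h t h1.1 h1.2]; exact h2
    · rw [h t h1.1 h1.2]; exact h2
  unfold stopTime
  by_cases hex : ∃ t, (1 ≤ t ∧ t ≤ H) ∧ π (trajPrefix x t) = true
  · have hex' : ∃ t, (1 ≤ t ∧ t ≤ H) ∧ π' (trajPrefix x t) = true :=
      ⟨hex.choose, (hiff _).mp hex.choose_spec⟩
    rw [dif_pos hex, dif_pos hex']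
    exact le_antisymm (Nat.find_le ((hiff _).mpr (Nat.find_spec hex')))
      (Nat.find_le ((hiff _).mp (Nat.find_spec hex)))
  · have hex' : ¬ ∃ t, (1 ≤ t ∧ t ≤ H) ∧ π' (trajPrefix x t) = true := by
      rintro ⟨t, ht⟩; exact hex ⟨t, (hiff _).mpr ht⟩
    rw [dif_neg hex, dif_neg hex']

lemma policyReturn_congr {O : Type*} {H : ℕ} (g : List O → ℝ) (π π' : List O → Bool)
    (x : Fin H → O)
    (h : ∀ t, 1 ≤ t → t ≤ H → π (trajPrefix x t) = π' (trajPrefix x t)) :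
    policyReturn g π x = policyReturn g π' x := by
  unfold policyReturn
  rw [stopTime_congr π π' x h]


/-- The number of distinct Boolean labeling vectors produced by the indicator class
`I(π, Δ)(x) = (R_π(x) ≥ Δ)` on `n` full trajectories is at most `(n·H + 1)·(e·n·H/d)^d`. -/
theorem indicator_labelings_card_le {O : Type*} {H n d : ℕ} (hH : 1 ≤ H) (hd : 1 ≤ d)
    (P : Set (List O → Bool))
    (hVC : ∀ S : Finset (List O), S.card = d + 1 → ¬ ShattersLists P S)
    (g : List O → ℝ)
    (x : Fin n → (Fin H → O)) (hnH : d ≤ n * H) :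
    ((Set.ncard {v : Fin n → Bool | ∃ π ∈ P, ∃ Δ : ℝ,
        ∀ i : Fin n, (v i = true ↔ Δ ≤ policyReturn g π (x i))} : ℝ))
      ≤ ((n : ℝ) * H + 1) * (Real.exp 1 * n * H / d) ^ d := by
  classical
  set V : Set (Fin n → Bool) := {v : Fin n → Bool | ∃ π ∈ P, ∃ Δ : ℝ,
        ∀ i : Fin n, (v i = true ↔ Δ ≤ policyReturn g π (x i))} with hV
  set T : Finset (List O) :=
    Finset.image (fun p : Fin n × Fin H => trajPrefix (x p.1) (p.2 + 1)) Finset.univ with hT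
  have hTcard : T.card ≤ n * H := by
    calc T.card ≤ (Finset.univ : Finset (Fin n × Fin H)).card := Finset.card_image_le
      _ = n * H := by simp
  -- agreement on T determines the returns
  have hret : ∀ π π' : List O → Bool, (∀ l ∈ T, π l = π' l) →
      ∀ i, policyReturn g π (x i) = policyReturn g π' (x i) := by
    intro π π' hagree i
    apply policyReturn_congr
    intro t ht1 ht2
    apply hagree
    rw [hT]
    simp only [Finset.mem_image, Finset.mem_univ, true_and]
    refine ⟨⟨i, ⟨t - 1, by omega⟩⟩, ?_⟩
    simp only
    congr 1
    omega
  set A : Finset (Finset (List O)) :=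
    T.powerset.filter (fun s => ∃ π ∈ P, s = T.filter (fun l => π l = true)) with hA
  -- every shattered set is a small subset of T
  have hsh : ∀ s ∈ A.shatterer, s ⊆ T ∧ s.card ≤ d := by
    intro s hs
    rw [Finset.mem_shatterer] at hs
    have hsT : s ⊆ T := by
      obtain ⟨u, hu, hsu⟩ := hs.exists_superset
      rw [hA, Finset.mem_filter, Finset.mem_powerset] at hu
      exact hsu.trans hu.1
    refine ⟨hsT, ?_⟩
    by_contra hcard
    push_neg at hcard
    obtain ⟨s', hs'sub, hs'card⟩ := Finset.exists_subset_card_eq (n := d + 1) (s := s) (by omega)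
    apply hVC s' hs'card
    intro f
    have hsh' : A.Shatters s' := hs.mono_right hs'sub
    obtain ⟨u, hu, huint⟩ := hsh' (Finset.filter_subset (fun l => f l = true) s')
    rw [hA, Finset.mem_filter] at hu
    obtain ⟨π, hπP, rfl⟩ := hu.2
    refine ⟨π, hπP, ?_⟩
    intro l hl
    have hlT : l ∈ T := hsT (hs'sub hl)
    have h1 : l ∈ s' ∩ T.filter (fun l => π l = true) ↔
        l ∈ s'.filter (fun l => f l = true) := by rw [huint]
    simp only [Finset.mem_inter, Finset.mem_filter, hl, hlT, true_and] at h1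
    exact bool_eq_of_iff h1
  -- Sauer–Shelah bound on |A|
  have hAcard : A.card ≤ ∑ k ∈ Finset.range (d + 1), T.card.choose k := by
    calc A.card ≤ A.shatterer.card := Finset.card_le_card_shatterer A
      _ ≤ ((Finset.range (d + 1)).biUnion (fun k => T.powersetCard k)).card := by
          apply Finset.card_le_card
          intro s hs
          rw [Finset.mem_biUnion]
          exact ⟨s.card, Finset.mem_range.mpr (Nat.lt_succ_of_le (hsh s hs).2),
            Finset.mem_powersetCard.mpr ⟨(hsh s hs).1, rfl⟩⟩
      _ ≤ ∑ k ∈ Finset.range (d + 1), (T.powersetCard k).card := Finset.card_biUnion_le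
      _ = ∑ k ∈ Finset.range (d + 1), T.card.choose k := by
          simp [Finset.card_powersetCard]
  -- injection from V into A × range (n+1)
  let F : (Fin n → Bool) → Finset (List O) × ℕ := fun v =>
    if h : v ∈ V then
      (T.filter (fun l => h.choose l = true),
        (Finset.univ.filter (fun i : Fin n =>
          h.choose_spec.2.choose ≤ policyReturn g h.choose (x i))).card)
    else (∅, 0)
  have hinj : Set.InjOn F V := by
    intro v hv v' hv' hEq
    simp only [F, dif_pos hv, dif_pos hv', Prod.mk.injEq] at hEq
    obtain ⟨h1, h2⟩ := hEq
    set π := hv.choose with hπ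
    set π' := hv'.choose with hπ'
    set Δ := hv.choose_spec.2.choose with hΔ
    set Δ' := hv'.choose_spec.2.choose with hΔ'
    have hvspec : ∀ i, v i = true ↔ Δ ≤ policyReturn g π (x i) :=
      hv.choose_spec.2.choose_spec
    have hv'spec : ∀ i, v' i = true ↔ Δ' ≤ policyReturn g π' (x i) :=
      hv'.choose_spec.2.choose_spec
    have hagree : ∀ l ∈ T, π l = π' l := by
      intro l hl
      have : l ∈ T.filter (fun l => π l = true) ↔ l ∈ T.filter (fun l => π' l = true) := by
        rw [h1]
      simp only [Finset.mem_filter, hl, true_and] at this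
      exact bool_eq_of_iff this
    have hr : ∀ i, policyReturn g π (x i) = policyReturn g π' (x i) := hret π π' hagree
    have hsets : (Finset.univ.filter (fun i : Fin n => Δ ≤ policyReturn g π (x i)))
        = Finset.univ.filter (fun i : Fin n => Δ' ≤ policyReturn g π' (x i)) := by
      rw [← hπ, ← hπ'] at h2
      simp only [← hr] at h2 ⊢
      rcases le_total Δ Δ' with hle | hle
      · refine (Finset.eq_of_subset_of_card_le ?_ (le_of_eq h2)).symm
        intro i hi
        simp only [Finset.mem_filter, Finset.mem_univ, true_and] at hi ⊢
        linarith
      · refine Finset.eq_of_subset_of_card_le ?_ (le_of_eq h2.symm)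
        intro i hi
        simp only [Finset.mem_filter, Finset.mem_univ, true_and] at hi ⊢
        linarith
    funext i
    have : (Δ ≤ policyReturn g π (x i)) ↔ (Δ' ≤ policyReturn g π' (x i)) := by
      have := Finset.ext_iff.mp hsets i
      simpa using this
    have hvv : v i = true ↔ v' i = true := by
      rw [hvspec i, hv'spec i, this]
    exact bool_eq_of_iff hvv
  have himg : F '' V ⊆ ↑(A ×ˢ Finset.range (n + 1)) := by
    rintro _ ⟨v, hv, rfl⟩
    simp only [F, dif_pos hv, Finset.coe_product, Set.mem_prod, Finset.mem_coe,
      Finset.mem_range]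
    constructor
    · rw [hA, Finset.mem_filter, Finset.mem_powerset]
      exact ⟨Finset.filter_subset _ _, hv.choose, hv.choose_spec.1, rfl⟩
    · calc (Finset.univ.filter _).card ≤ (Finset.univ : Finset (Fin n)).card :=
          Finset.card_filter_le _ _
        _ = n := by simp
        _ < n + 1 := by omega
  have hcount : V.ncard ≤ A.card * (n + 1) := by
    calc V.ncard = (F '' V).ncard := (Set.ncard_image_of_injOn hinj).symm
      _ ≤ (↑(A ×ˢ Finset.range (n + 1)) : Set (Finset (List O) × ℕ)).ncard :=
          Set.ncard_le_ncard himg (Finset.finite_toSet _)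
      _ = (A ×ˢ Finset.range (n + 1)).card := Set.ncard_coe_finset _
      _ = A.card * (n + 1) := by rw [Finset.card_product, Finset.card_range]
  -- numeric conclusion
  have hchoose : (∑ k ∈ Finset.range (d + 1), T.card.choose k)
      ≤ ∑ k ∈ Finset.range (d + 1), (n * H).choose k := by
    apply Finset.sum_le_sum
    intro k _
    exact Nat.choose_le_choose k hTcard
  have hphi := phi_le (n * H) d hd hnH
  have hVn : (V.ncard : ℝ) ≤ ((∑ k ∈ Finset.range (d + 1), (n * H).choose k : ℕ) : ℝ) * (n + 1) := by
    have : V.ncard ≤ (∑ k ∈ Finset.range (d + 1), (n * H).choose k) * (n + 1) := by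
      calc V.ncard ≤ A.card * (n + 1) := hcount
        _ ≤ (∑ k ∈ Finset.range (d + 1), T.card.choose k) * (n + 1) := by
            exact Nat.mul_le_mul_right _ hAcard
        _ ≤ (∑ k ∈ Finset.range (d + 1), (n * H).choose k) * (n + 1) :=
            Nat.mul_le_mul_right _ hchoose
    exact_mod_cast this
  have hn1 : ((n : ℝ) + 1) ≤ (n : ℝ) * H + 1 := by
    have h1 : (1 : ℝ) ≤ (H : ℝ) := by exact_mod_cast hH
    have h0 : (0 : ℝ) ≤ (n : ℝ) := Nat.cast_nonneg n
    nlinarith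
  have hpow : (Real.exp 1 * (n * H : ℕ) / d) ^ d = (Real.exp 1 * n * H / d) ^ d := by
    congr 1
    push_cast
    ring
  calc (V.ncard : ℝ)
      ≤ ((∑ k ∈ Finset.range (d + 1), (n * H).choose k : ℕ) : ℝ) * (n + 1) := hVn
    _ ≤ (Real.exp 1 * (n * H : ℕ) / d) ^ d * ((n : ℝ) * H + 1) := by
        apply mul_le_mul hphi (by push_cast; exact hn1) (by positivity) (by positivity)
    _ = ((n : ℝ) * H + 1) * (Real.exp 1 * n * H / d) ^ d := by
        rw [hpow]; ring
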